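/- arXiv:1301.1038 — 2 statements merged into one kernel-verified Lean document; each statement's English description precedes it below -/
import Mathlib

section
/- Let (S,T) be a Cuntz-type representation of F_θ^+ on H (m ≥ 2 or n ≥ 2) and let 𝔖 be the unital WOT-closed algebra it generates. Given k,l > 0, let 𝔍_{k,l} be the WOT-closed right ideal of 𝔖 generated by the row-isometry [S_uT_v : |u|=k, |v|=l], i.e. the WOT-closure of the set of finite sums Σ_{|u|=k,|v|=l} S_uT_vA_{u,v} with A_{u,v} ∈ 𝔖. Then 𝔖 is self-adjoint (equivalently, 𝔖 is a von Neumann algebra) if and only if the identity operator I belongs to 𝔍_{k,l}. -/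
noncomputable section

open scoped InnerProductSpace ComplexInnerProductSpace Classical

section GeneralDefs

variable {E : Type*} [NormedAddCommGroup E] [InnerProductSpace ℂ E]

/-- The operator associated to a word: `wordOp V [a₁, …, a_r] = V a₁ * ⋯ * V a_r`. -/
def wordOp {ι : Type*} (V : ι → E →L[ℂ] E) (w : List ι) : E →L[ℂ] E :=
  (w.map V).prod

/-- The operator associated to a word of fixed length `k` given as a function `Fin k → ι`. -/
def fnWordOp {ι : Type*} {k : ℕ} (V : ι → E →L[ℂ] E) (u : Fin k → ι) : E →L[ℂ] E :=
  wordOp V (List.ofFn u)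

/-- The closure of a set of operators in the weak operator topology, described via
basic WOT-neighbourhoods (finitely many vector functionals). -/
def wotClosure (S : Set (E →L[ℂ] E)) : Set (E →L[ℂ] E) :=
  {A | ∀ ε > (0 : ℝ), ∀ F : Finset (E × E), ∃ B ∈ S, ∀ p ∈ F, ‖⟪p.1, (A - B) p.2⟫‖ < ε}

/-- The unital WOT-closed algebra generated by a set of operators. -/
def genWotAlg (G : Set (E →L[ℂ] E)) : Set (E →L[ℂ] E) :=
  wotClosure ((Algebra.adjoin ℂ G : Subalgebra ℂ (E →L[ℂ] E)) : Set (E →L[ℂ] E))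

/-- A wandering vector for a row-isometry `V = [V_a : a ∈ ι]`: a unit vector whose orbit
under all words in the `V_a` is an orthonormal family. -/
def IsWandering {ι : Type*} (V : ι → E →L[ℂ] E) (ζ : E) : Prop :=
  ‖ζ‖ = 1 ∧ ∀ w w' : List ι,
    ⟪wordOp V w ζ, wordOp V w' ζ⟫ = if w = w' then 1 else 0

/-- Restriction of an operator to an invariant subspace (junk value `0` if not invariant). -/
def restrictCLM (A : E →L[ℂ] E) (M : Submodule ℂ E) : M →L[ℂ] M :=
  if h : ∀ x ∈ M, A x ∈ M then
    { toFun := fun x => ⟨A x, h x x.2⟩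
      map_add' := by intro x y; ext; simp
      map_smul' := by intro c x; ext; simp
      cont := Continuous.subtype_mk (A.continuous.comp continuous_subtype_val) _ }
  else 0

/-- The unital WOT-closed algebra on `M` generated by the restrictions of the `V a` to `M`. -/
def rowAlgOn {ι : Type*} (V : ι → E →L[ℂ] E) (M : Submodule ℂ E) : Set (M →L[ℂ] M) :=
  genWotAlg (Set.range fun a => restrictCLM (V a) M)

/-- The unital WOT-closed algebra on `M` generated by the restrictions of the `V a`
is self-adjoint. -/
def restrictedAlgSelfAdjoint {ι : Type*} (V : ι → E →L[ℂ] E) (M : Submodule ℂ E) : Prop :=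
  ∀ A ∈ rowAlgOn V M, ∃ B ∈ rowAlgOn V M,
    ∀ x y : M, ⟪((A x : M) : E), (y : E)⟫ = ⟪(x : E), ((B y : M) : E)⟫

variable [CompleteSpace E]

/-- A row-isometry is of dilation type if it is defect free and has no nonzero reducing
subspace on which it is either absolutely continuous (spanned by wandering vectors) or
singular (generating a self-adjoint WOT-closed algebra). -/
def IsDilationType {ι : Type*} [Fintype ι] (V : ι → E →L[ℂ] E) : Prop :=
  (∑ a, V a * star (V a)) = 1 ∧
    ¬ ∃ M : Submodule ℂ E, M ≠ ⊥ ∧ IsClosed (M : Set E) ∧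
      (∀ a, ∀ x ∈ M, V a x ∈ M) ∧ (∀ a, ∀ x ∈ M, star (V a) x ∈ M) ∧
      ((M = (Submodule.span ℂ {ζ : E | ζ ∈ M ∧ IsWandering V ζ}).topologicalClosure) ∨
        restrictedAlgSelfAdjoint V M)

end GeneralDefs

/-- An isometric representation of the single-vertex 2-graph `F_θ⁺` on a Hilbert space `H`. -/
structure TwoGraphRep (m n : ℕ) (θ : Equiv.Perm (Fin m × Fin n)) (H : Type*)
    [NormedAddCommGroup H] [InnerProductSpace ℂ H] [CompleteSpace H] where
  S : Fin m → H →L[ℂ] H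
  T : Fin n → H →L[ℂ] H
  isometS : ∀ i i', star (S i) * S i' = if i = i' then 1 else 0
  isometT : ∀ j j', star (T j) * T j' = if j = j' then 1 else 0
  comm : ∀ i j, S i * T j = T (θ (i, j)).2 * S (θ (i, j)).1

namespace TwoGraphRep

variable {m n : ℕ} {θ : Equiv.Perm (Fin m × Fin n)} {H : Type*}
  [NormedAddCommGroup H] [InnerProductSpace ℂ H] [CompleteSpace H]

/-- A representation is of Cuntz type if both row-isometries are defect free. -/
def CuntzType (ρ : TwoGraphRep m n θ H) : Prop :=
  (∑ i, ρ.S i * star (ρ.S i)) = 1 ∧ (∑ j, ρ.T j * star (ρ.T j)) = 1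

/-- The nonself-adjoint 2-graph algebra `𝔖`: the unital WOT-closed algebra generated by
the `S_i` and `T_j`. -/
def alg (ρ : TwoGraphRep m n θ H) : Set (H →L[ℂ] H) :=
  genWotAlg (Set.range ρ.S ∪ Set.range ρ.T)

/-- The von Neumann algebra generated by the `S_i` and `T_j`: the WOT-closure of the
unital *-algebra they generate. -/
def vnAlg (ρ : TwoGraphRep m n θ H) : Set (H →L[ℂ] H) :=
  genWotAlg ((Set.range ρ.S ∪ Set.range ρ.T) ∪ star '' (Set.range ρ.S ∪ Set.range ρ.T))

/-- Wandering vector for the row-isometry `[S_u T_v : |u| = k, |v| = l]`. -/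
def IsWanderingKL (ρ : TwoGraphRep m n θ H) (k l : ℕ) (ζ : H) : Prop :=
  ‖ζ‖ = 1 ∧ ∀ (p p' : ℕ) (u u' : List (Fin m)) (v v' : List (Fin n)),
    u.length = p * k → v.length = p * l → u'.length = p' * k → v'.length = p' * l →
    ⟪(wordOp ρ.S u * wordOp ρ.T v) ζ, (wordOp ρ.S u' * wordOp ρ.T v') ζ⟫ =
      if u = u' ∧ v = v' then 1 else 0

/-- The range of the structure projection `P_{k,l}`: the orthogonal complement of the
closed linear span of the wandering vectors of `[S_u T_v : |u| = k, |v| = l]`. -/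
def structSpaceKL (ρ : TwoGraphRep m n θ H) (k l : ℕ) : Submodule ℂ H :=
  ((Submodule.span ℂ {ζ : H | ρ.IsWanderingKL k l ζ}).topologicalClosure)ᗮ

/-- The range of the first structure projection `P = ⋀_{k,l>0} P_{k,l}`. -/
def firstStructSpace (ρ : TwoGraphRep m n θ H) : Submodule ℂ H :=
  ⨅ (k : ℕ) (l : ℕ) (_ : 0 < k) (_ : 0 < l), ρ.structSpaceKL k l

/-- The row-isometry `[S_u T_v : |u| = k, |v| = l]`. -/
def rowKL (ρ : TwoGraphRep m n θ H) (k l : ℕ) :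
    ((Fin k → Fin m) × (Fin l → Fin n)) → H →L[ℂ] H :=
  fun p => fnWordOp ρ.S p.1 * fnWordOp ρ.T p.2

/-- A wandering vector for the representation `(S,T)`. -/
def IsWanderingRep (ρ : TwoGraphRep m n θ H) (ζ : H) : Prop :=
  ‖ζ‖ = 1 ∧ ∀ (u u' : List (Fin m)) (v v' : List (Fin n)),
    ⟪(wordOp ρ.S u * wordOp ρ.T v) ζ, (wordOp ρ.S u' * wordOp ρ.T v') ζ⟫ =
      if u = u' ∧ v = v' then 1 else 0

/-- The representation is irreducible: the only closed subspaces invariant under all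
`S_i, T_j, S_i*, T_j*` are `⊥` and `⊤`. -/
def Irreducible (ρ : TwoGraphRep m n θ H) : Prop :=
  ∀ M : Submodule ℂ H, IsClosed (M : Set H) →
    (∀ i, ∀ x ∈ M, ρ.S i x ∈ M) → (∀ i, ∀ x ∈ M, star (ρ.S i) x ∈ M) →
    (∀ j, ∀ x ∈ M, ρ.T j x ∈ M) → (∀ j, ∀ x ∈ M, star (ρ.T j) x ∈ M) →
    M = ⊥ ∨ M = ⊤

/-- The representation is atomic with standard basis `ξ`: every generator maps each basis
vector to a unimodular multiple of a basis vector. -/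
def AtomicBasis {Λ : Type*} (ρ : TwoGraphRep m n θ H) (ξ : HilbertBasis Λ ℂ H) : Prop :=
  (∀ i t, ∃ (c : ℂ) (t' : Λ), ‖c‖ = 1 ∧ ρ.S i (ξ t) = c • ξ t') ∧
  (∀ j t, ∃ (c : ℂ) (t' : Λ), ‖c‖ = 1 ∧ ρ.T j (ξ t) = c • ξ t')

/-- `x` has a blue ring: `S_u x ∈ 𝕋x` for some nonempty word `u`. -/
def HasBlueRing (ρ : TwoGraphRep m n θ H) (x : H) : Prop :=
  ∃ u : List (Fin m), u ≠ [] ∧ ∃ c : ℂ, ‖c‖ = 1 ∧ wordOp ρ.S u x = c • x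

/-- `x` has a red ring: `T_v x ∈ 𝕋x` for some nonempty word `v`. -/
def HasRedRing (ρ : TwoGraphRep m n θ H) (x : H) : Prop :=
  ∃ v : List (Fin n), v ≠ [] ∧ ∃ c : ℂ, ‖c‖ = 1 ∧ wordOp ρ.T v x = c • x

/-- `x` has a mixed ring: `T_v S_u x ∈ 𝕋x` for some nonempty words `u`, `v`. -/
def HasMixedRing (ρ : TwoGraphRep m n θ H) (x : H) : Prop :=
  ∃ (u : List (Fin m)) (v : List (Fin n)), u ≠ [] ∧ v ≠ [] ∧
    ∃ c : ℂ, ‖c‖ = 1 ∧ wordOp ρ.T v (wordOp ρ.S u x) = c • x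

end TwoGraphRep
set_option linter.unusedSectionVars false
section AuxWot

variable {E : Type*} [NormedAddCommGroup E] [InnerProductSpace ℂ E]

lemma mem_wotClosure_self {S : Set (E →L[ℂ] E)} {A : E →L[ℂ] E} (hA : A ∈ S) :
    A ∈ wotClosure S := by
  intro ε hε F
  exact ⟨A, hA, fun p _ => by simp [hε]⟩

lemma wotClosure_mono {S T : Set (E →L[ℂ] E)} (h : S ⊆ T) :
    wotClosure S ⊆ wotClosure T := by
  intro A hA ε hε F
  obtain ⟨B, hB, hB2⟩ := hA ε hε F
  exact ⟨B, h hB, hB2⟩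

lemma wotClosure_idem {S : Set (E →L[ℂ] E)} :
    wotClosure (wotClosure S) ⊆ wotClosure S := by
  intro A hA ε hε F
  obtain ⟨B, hB, hB2⟩ := hA (ε/2) (by positivity) F
  obtain ⟨C, hC, hC2⟩ := hB (ε/2) (by positivity) F
  refine ⟨C, hC, fun p hp => ?_⟩
  have : (A - C) p.2 = (A - B) p.2 + (B - C) p.2 := by
    simp only [ContinuousLinearMap.sub_apply, ContinuousLinearMap.add_apply]; abel
  rw [this, inner_add_right]
  calc ‖⟪p.1, (A - B) p.2⟫_ℂ + ⟪p.1, (B - C) p.2⟫_ℂ‖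
      ≤ ‖⟪p.1, (A - B) p.2⟫_ℂ‖ + ‖⟪p.1, (B - C) p.2⟫_ℂ‖ := norm_add_le _ _
    _ < ε/2 + ε/2 := add_lt_add (hB2 p hp) (hC2 p hp)
    _ = ε := by ring

lemma wot_transport {S : Set (E →L[ℂ] E)} {A : E →L[ℂ] E} (hA : A ∈ wotClosure S)
    (f : (E →L[ℂ] E) → (E →L[ℂ] E)) (g : E × E → E × E) (c : ℝ)
    (hfg : ∀ D D' : E →L[ℂ] E, ∀ p : E × E,
      ‖⟪p.1, (f D - f D') p.2⟫_ℂ‖ ≤ c * ‖⟪(g p).1, (D - D') (g p).2⟫_ℂ‖) :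
    f A ∈ wotClosure (f '' S) := by
  intro ε hε F
  have hδ : (0:ℝ) < ε / (|c| + 1) := by positivity
  obtain ⟨B, hB, hB2⟩ := hA _ hδ (F.image g)
  refine ⟨f B, Set.mem_image_of_mem f hB, fun p hp => ?_⟩
  have h1 : ‖⟪(g p).1, (A - B) (g p).2⟫_ℂ‖ < ε / (|c| + 1) :=
    hB2 (g p) (Finset.mem_image_of_mem g hp)
  calc ‖⟪p.1, (f A - f B) p.2⟫_ℂ‖ ≤ c * ‖⟪(g p).1, (A - B) (g p).2⟫_ℂ‖ := hfg A B p
    _ ≤ |c| * ‖⟪(g p).1, (A - B) (g p).2⟫_ℂ‖ :=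
        mul_le_mul_of_nonneg_right (le_abs_self c) (norm_nonneg _)
    _ ≤ |c| * (ε / (|c| + 1)) := mul_le_mul_of_nonneg_left h1.le (abs_nonneg c)
    _ < (|c| + 1) * (ε / (|c| + 1)) := by
        exact mul_lt_mul_of_pos_right (lt_add_one _) hδ
    _ = ε := by field_simp

lemma wot_add {S S' : Set (E →L[ℂ] E)} {A A' : E →L[ℂ] E}
    (hA : A ∈ wotClosure S) (hA' : A' ∈ wotClosure S') :
    A + A' ∈ wotClosure {x | ∃ b ∈ S, ∃ b' ∈ S', x = b + b'} := by
  intro ε hε F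
  obtain ⟨B, hB, hB2⟩ := hA (ε/2) (by positivity) F
  obtain ⟨B', hB', hB2'⟩ := hA' (ε/2) (by positivity) F
  refine ⟨B + B', ⟨B, hB, B', hB', rfl⟩, fun p hp => ?_⟩
  have : (A + A' - (B + B')) p.2 = (A - B) p.2 + (A' - B') p.2 := by
    simp only [ContinuousLinearMap.sub_apply, ContinuousLinearMap.add_apply]; abel
  rw [this, inner_add_right]
  calc ‖⟪p.1, (A - B) p.2⟫_ℂ + ⟪p.1, (A' - B') p.2⟫_ℂ‖
      ≤ ‖⟪p.1, (A - B) p.2⟫_ℂ‖ + ‖⟪p.1, (A' - B') p.2⟫_ℂ‖ := norm_add_le _ _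
    _ < ε/2 + ε/2 := add_lt_add (hB2 p hp) (hB2' p hp)
    _ = ε := by ring

end AuxWot
section AuxAlg

variable {E : Type*} [NormedAddCommGroup E] [InnerProductSpace ℂ E] [CompleteSpace E]
variable {G : Set (E →L[ℂ] E)}

lemma subset_genWotAlg :
    ((Algebra.adjoin ℂ G : Subalgebra ℂ (E →L[ℂ] E)) : Set (E →L[ℂ] E)) ⊆ genWotAlg G :=
  fun _ h => mem_wotClosure_self h

lemma adjoin_mem_genWotAlg {A : E →L[ℂ] E} (hA : A ∈ Algebra.adjoin ℂ G) : A ∈ genWotAlg G :=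
  subset_genWotAlg hA

lemma mul_left_mem_genWotAlg {C A : E →L[ℂ] E} (hC : C ∈ Algebra.adjoin ℂ G)
    (hA : A ∈ genWotAlg G) : C * A ∈ genWotAlg G := by
  have h := wot_transport hA (fun D => C * D)
      (fun p => (ContinuousLinearMap.adjoint C p.1, p.2)) 1 ?_
  · refine wotClosure_mono ?_ h
    rintro x ⟨a, ha, rfl⟩
    exact SetLike.mem_coe.2 (mul_mem hC (SetLike.mem_coe.1 ha))
  · intro D D' p
    have h1 : C * D - C * D' = C * (D - D') := (mul_sub C D D').symm
    rw [h1, one_mul, ContinuousLinearMap.mul_apply,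
      ← ContinuousLinearMap.adjoint_inner_left]

lemma mul_mem_genWotAlg {A B : E →L[ℂ] E} (hA : A ∈ genWotAlg G) (hB : B ∈ genWotAlg G) :
    A * B ∈ genWotAlg G := by
  have h := wot_transport hA (fun D => D * B) (fun p => (p.1, B p.2)) 1 ?_
  · refine wotClosure_idem (wotClosure_mono ?_ h)
    rintro x ⟨a, ha, rfl⟩
    exact mul_left_mem_genWotAlg (SetLike.mem_coe.1 ha) hB
  · intro D D' p
    have h1 : D * B - D' * B = (D - D') * B := (sub_mul D D' B).symm
    rw [h1, one_mul, ContinuousLinearMap.mul_apply]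

lemma add_mem_genWotAlg {A B : E →L[ℂ] E} (hA : A ∈ genWotAlg G) (hB : B ∈ genWotAlg G) :
    A + B ∈ genWotAlg G := by
  refine wotClosure_idem (wotClosure_mono ?_ (wot_add hA hB))
  rintro x ⟨b, hb, b', hb', rfl⟩
  exact adjoin_mem_genWotAlg (add_mem (SetLike.mem_coe.1 hb) (SetLike.mem_coe.1 hb'))

lemma sum_mem_genWotAlg {ι : Type*} (s : Finset ι) (f : ι → E →L[ℂ] E)
    (hf : ∀ a ∈ s, f a ∈ genWotAlg G) : (∑ a ∈ s, f a) ∈ genWotAlg G := by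
  classical
  induction s using Finset.induction with
  | empty => simpa using adjoin_mem_genWotAlg (zero_mem _)
  | @insert a s h ih =>
    rw [Finset.sum_insert h]
    exact add_mem_genWotAlg (hf _ (Finset.mem_insert_self _ _))
      (ih fun a ha => hf a (Finset.mem_insert_of_mem ha))

lemma star_mem_genWotAlg (hG : ∀ A ∈ G, star A ∈ genWotAlg G) :
    ∀ A ∈ genWotAlg G, star A ∈ genWotAlg G := by
  have hadj : ∀ x ∈ Algebra.adjoin ℂ G, star x ∈ genWotAlg G := by
    intro x hx
    induction hx using Algebra.adjoin_induction with
    | mem a ha => exact hG a ha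
    | algebraMap r =>
      rw [Algebra.algebraMap_eq_smul_one, star_smul, star_one]
      exact adjoin_mem_genWotAlg (Subalgebra.smul_mem _ (one_mem _) _)
    | add x y _ _ hx hy => rw [star_add]; exact add_mem_genWotAlg hx hy
    | mul x y _ _ hx hy => rw [star_mul]; exact mul_mem_genWotAlg hy hx
  intro A hA
  have h := wot_transport hA (fun D => star D) (fun p => (p.2, p.1)) 1 ?_
  · refine wotClosure_idem (wotClosure_mono ?_ h)
    rintro x ⟨a, ha, rfl⟩
    exact hadj a (SetLike.mem_coe.1 ha)
  · intro D D' p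
    rw [one_mul, ← star_sub, ContinuousLinearMap.star_eq_adjoint,
      ContinuousLinearMap.adjoint_inner_right]
    rw [← norm_inner_symm]

end AuxAlg
section AuxWord

variable {E : Type*} [NormedAddCommGroup E] [InnerProductSpace ℂ E] [CompleteSpace E]
variable {ι : Type*} (V : ι → E →L[ℂ] E)

lemma wordOp_nil : wordOp V ([] : List ι) = 1 := rfl

lemma wordOp_cons (a : ι) (w : List ι) : wordOp V (a :: w) = V a * wordOp V w := by
  simp [wordOp]

lemma fnWordOp_zero (u : Fin 0 → ι) : fnWordOp V u = 1 := by
  simp [fnWordOp, wordOp]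

lemma fnWordOp_succ {k : ℕ} (u : Fin (k + 1) → ι) :
    fnWordOp V u = V (u 0) * fnWordOp V (Fin.tail u) := by
  rw [fnWordOp, List.ofFn_succ, wordOp_cons]; rfl

lemma wordOp_mem_adjoin {G : Set (E →L[ℂ] E)} (hV : ∀ a, V a ∈ Algebra.adjoin ℂ G)
    (w : List ι) : wordOp V w ∈ Algebra.adjoin ℂ G := by
  induction w with
  | nil => exact one_mem _
  | cons a w ih => rw [wordOp_cons]; exact mul_mem (hV a) ih

lemma star_wordOp_mul (hV : ∀ a b, star (V a) * V b = if a = b then (1 : E →L[ℂ] E) else 0) :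
    ∀ w w' : List ι, w.length = w'.length →
      star (wordOp V w) * wordOp V w' = if w = w' then 1 else 0 := by
  intro w
  induction w with
  | nil =>
    intro w' hw'
    rw [List.length_nil] at hw'
    rw [List.eq_nil_of_length_eq_zero hw'.symm]
    simp [wordOp_nil]
  | cons a w ih =>
    intro w' hw'
    cases w' with
    | nil => simp at hw'
    | cons b w'' =>
      simp only [List.length_cons, Nat.succ_inj] at hw'
      rw [wordOp_cons, wordOp_cons, star_mul]
      have key : star (wordOp V w) * star (V a) * (V b * wordOp V w'')
          = star (wordOp V w) * (star (V a) * V b) * wordOp V w'' := by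
        simp [mul_assoc]
      rw [key, hV a b]
      by_cases hab : a = b
      · subst hab
        rw [if_pos rfl, mul_one, ih w'' hw']
        by_cases hww : w = w''
        · subst hww; simp
        · rw [if_neg hww, if_neg (by simp [hww])]
      · rw [if_neg hab, mul_zero, zero_mul, if_neg (by simp [hab])]

variable [Fintype ι]

lemma sum_fnWordOp_mul_star (hV : (∑ a, V a * star (V a)) = 1) (k : ℕ) :
    (∑ u : Fin k → ι, fnWordOp V u * star (fnWordOp V u)) = 1 := by
  induction k with
  | zero =>
    have : ∀ u : Fin 0 → ι, fnWordOp V u * star (fnWordOp V u) = 1 := by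
      intro u; rw [fnWordOp_zero]; simp
    simp [this]
  | succ k ih =>
    have he := Fintype.sum_equiv (Fin.consEquiv (fun _ : Fin (k+1) => ι))
      (fun p : ι × (Fin k → ι) => fnWordOp V (Fin.cons p.1 p.2) * star (fnWordOp V (Fin.cons p.1 p.2)))
      (fun u : Fin (k+1) → ι => fnWordOp V u * star (fnWordOp V u))
      (fun p => rfl)
    rw [← he, Fintype.sum_prod_type]
    have hterm : ∀ (i : ι) (u : Fin k → ι),
        fnWordOp V (Fin.cons i u) * star (fnWordOp V (Fin.cons i u))
          = V i * (fnWordOp V u * star (fnWordOp V u) * star (V i)) := by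
      intro i u
      rw [fnWordOp_succ]
      simp only [Fin.cons_zero, Fin.tail_cons, star_mul, mul_assoc]
    have hrow : ∀ i : ι, (∑ u : Fin k → ι, fnWordOp V (Fin.cons i u) * star (fnWordOp V (Fin.cons i u)))
        = V i * star (V i) := by
      intro i
      simp only [hterm]
      rw [← Finset.mul_sum, ← Finset.sum_mul, ih, one_mul]
    simp only [hrow, hV]

end AuxWord
section AuxRep

variable {m n : ℕ} {θ : Equiv.Perm (Fin m × Fin n)} {H : Type*}
  [NormedAddCommGroup H] [InnerProductSpace ℂ H] [CompleteSpace H]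
  (ρ : TwoGraphRep m n θ H)

lemma comm_single : ∀ (v : List (Fin n)) (i : Fin m), ∃ (v' : List (Fin n)) (i' : Fin m),
    v'.length = v.length ∧ ρ.S i * wordOp ρ.T v = wordOp ρ.T v' * ρ.S i' := by
  intro v
  induction v with
  | nil => exact fun i => ⟨[], i, rfl, by rw [wordOp_nil, one_mul, mul_one]⟩
  | cons j v ih =>
    intro i
    obtain ⟨v', i', hlen, hcomm⟩ := ih (θ (i, j)).1
    refine ⟨(θ (i, j)).2 :: v', i', by simp [hlen], ?_⟩
    rw [wordOp_cons, wordOp_cons, ← mul_assoc, ρ.comm i j, mul_assoc, hcomm, ← mul_assoc]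

lemma comm_word : ∀ (u : List (Fin m)) (v : List (Fin n)),
    ∃ (v' : List (Fin n)) (u' : List (Fin m)), v'.length = v.length ∧ u'.length = u.length ∧
      wordOp ρ.S u * wordOp ρ.T v = wordOp ρ.T v' * wordOp ρ.S u' := by
  intro u
  induction u with
  | nil => exact fun v => ⟨v, [], rfl, rfl, by rw [wordOp_nil, one_mul, mul_one]⟩
  | cons i u ih =>
    intro v
    obtain ⟨v₁, u₁, hv₁, hu₁, h₁⟩ := ih v
    obtain ⟨v₂, i₂, hv₂, h₂⟩ := comm_single ρ v₁ i
    refine ⟨v₂, i₂ :: u₁, by rw [hv₂, hv₁], by simp [hu₁], ?_⟩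
    rw [wordOp_cons, wordOp_cons, mul_assoc, h₁, ← mul_assoc, h₂, mul_assoc]

lemma star_rowKL_mul (k l : ℕ) (a b : (Fin k → Fin m) × (Fin l → Fin n)) :
    star (ρ.rowKL k l a) * ρ.rowKL k l b = if a = b then 1 else 0 := by
  rw [TwoGraphRep.rowKL, TwoGraphRep.rowKL, star_mul]
  have key : star (fnWordOp ρ.T a.2) * star (fnWordOp ρ.S a.1) *
      (fnWordOp ρ.S b.1 * fnWordOp ρ.T b.2)
      = star (fnWordOp ρ.T a.2) * (star (fnWordOp ρ.S a.1) * fnWordOp ρ.S b.1) *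
        fnWordOp ρ.T b.2 := by simp [mul_assoc]
  rw [key]
  have hS : star (wordOp ρ.S (List.ofFn a.1)) * wordOp ρ.S (List.ofFn b.1)
      = if List.ofFn a.1 = List.ofFn b.1 then 1 else 0 :=
    (star_wordOp_mul ρ.S (fun a b => by rw [ρ.isometS a b]; congr) _ _ (by simp)).trans (by congr)
  by_cases h1 : a.1 = b.1
  · rw [show star (fnWordOp ρ.S a.1) * fnWordOp ρ.S b.1 = 1 by
      rw [fnWordOp, fnWordOp, hS, if_pos (by rw [h1])], mul_one]
    have hT : star (wordOp ρ.T (List.ofFn a.2)) * wordOp ρ.T (List.ofFn b.2)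
        = if List.ofFn a.2 = List.ofFn b.2 then 1 else 0 :=
      (star_wordOp_mul ρ.T (fun a b => by rw [ρ.isometT a b]; congr) _ _ (by simp)).trans (by congr)
    rw [fnWordOp, fnWordOp, hT]
    by_cases h2 : a.2 = b.2
    · rw [if_pos (by rw [h2]), if_pos (Prod.ext h1 h2)]
    · rw [if_neg (by simpa [List.ofFn_inj] using h2), if_neg (by
        simp [Prod.ext_iff, h2])]
  · rw [show star (fnWordOp ρ.S a.1) * fnWordOp ρ.S b.1 = 0 by
      rw [fnWordOp, fnWordOp, hS, if_neg (by simpa [List.ofFn_inj] using h1)],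
      mul_zero, zero_mul, if_neg (by simp [Prod.ext_iff, h1])]

lemma sum_rowKL_mul_star (hCuntz : ρ.CuntzType) (k l : ℕ) :
    (∑ a : (Fin k → Fin m) × (Fin l → Fin n), ρ.rowKL k l a * star (ρ.rowKL k l a)) = 1 := by
  have hT : (∑ v : Fin l → Fin n, fnWordOp ρ.T v * star (fnWordOp ρ.T v)) = 1 :=
    sum_fnWordOp_mul_star ρ.T hCuntz.2 l
  have hS : (∑ u : Fin k → Fin m, fnWordOp ρ.S u * star (fnWordOp ρ.S u)) = 1 :=
    sum_fnWordOp_mul_star ρ.S hCuntz.1 k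
  rw [Fintype.sum_prod_type]
  have hterm : ∀ (u : Fin k → Fin m) (v : Fin l → Fin n),
      ρ.rowKL k l (u, v) * star (ρ.rowKL k l (u, v))
        = fnWordOp ρ.S u * (fnWordOp ρ.T v * star (fnWordOp ρ.T v) * star (fnWordOp ρ.S u)) := by
    intro u v
    rw [TwoGraphRep.rowKL, star_mul]
    simp [mul_assoc]
  have hrow : ∀ u : Fin k → Fin m,
      (∑ v : Fin l → Fin n, ρ.rowKL k l (u, v) * star (ρ.rowKL k l (u, v)))
        = fnWordOp ρ.S u * star (fnWordOp ρ.S u) := by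
    intro u
    simp only [hterm]
    rw [← Finset.mul_sum, ← Finset.sum_mul, hT, one_mul]
  simp only [hrow, hS]

end AuxRep
/-- `𝔖` is a von Neumann algebra iff the WOT-closed right ideal generated by the row-isometry
`[S_u T_v : |u|=k, |v|=l]` contains the identity. -/
theorem statement2 {m n : ℕ} (hm : 0 < m) (hn : 0 < n) (hmn : 2 ≤ m ∨ 2 ≤ n)
    {θ : Equiv.Perm (Fin m × Fin n)} {H : Type*}
    [NormedAddCommGroup H] [InnerProductSpace ℂ H] [CompleteSpace H]
    (ρ : TwoGraphRep m n θ H) (hCuntz : ρ.CuntzType)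
    (k l : ℕ) (hk : 0 < k) (hl : 0 < l) :
    (∀ A ∈ ρ.alg, star A ∈ ρ.alg) ↔
      (1 : H →L[ℂ] H) ∈ wotClosure
        {X : H →L[ℂ] H | ∃ A : ((Fin k → Fin m) × (Fin l → Fin n)) → (H →L[ℂ] H),
          (∀ a, A a ∈ ρ.alg) ∧ X = ∑ a, ρ.rowKL k l a * A a} := by
  set G : Set (H →L[ℂ] H) := Set.range ρ.S ∪ Set.range ρ.T with hG
  have halg : ρ.alg = genWotAlg G := rfl
  have hSmem : ∀ i, ρ.S i ∈ Algebra.adjoin ℂ G :=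
    fun i => Algebra.subset_adjoin (Or.inl ⟨i, rfl⟩)
  have hTmem : ∀ j, ρ.T j ∈ Algebra.adjoin ℂ G :=
    fun j => Algebra.subset_adjoin (Or.inr ⟨j, rfl⟩)
  have hrowmem : ∀ a : (Fin k → Fin m) × (Fin l → Fin n),
      ρ.rowKL k l a ∈ Algebra.adjoin ℂ G := by
    intro a
    exact mul_mem (wordOp_mem_adjoin ρ.S hSmem _) (wordOp_mem_adjoin ρ.T hTmem _)
  constructor
  · -- forward
    intro hSA
    apply mem_wotClosure_self
    refine ⟨fun a => star (ρ.rowKL k l a),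
      fun a => hSA _ (adjoin_mem_genWotAlg (hrowmem a)), ?_⟩
    exact (sum_rowKL_mul_star ρ hCuntz k l).symm
  · -- backward
    intro h1
    -- Step B1: adjoints of the row entries lie in the algebra
    have hstarR : ∀ b, star (ρ.rowKL k l b) ∈ ρ.alg := by
      intro b
      have htrans := wot_transport h1 (fun D => star (ρ.rowKL k l b) * D)
          (fun p => (ρ.rowKL k l b p.1, p.2)) 1 ?_
      swap
      · intro D D' p
        rw [one_mul, ← mul_sub, ContinuousLinearMap.mul_apply]
        have hadj : ContinuousLinearMap.adjoint (star (ρ.rowKL k l b)) = ρ.rowKL k l b := by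
          rw [ContinuousLinearMap.star_eq_adjoint, ContinuousLinearMap.adjoint_adjoint]
        exact le_of_eq (by rw [← ContinuousLinearMap.adjoint_inner_left, hadj])
      have himg : ∀ X ∈ {X : H →L[ℂ] H | ∃ A : ((Fin k → Fin m) × (Fin l → Fin n)) → (H →L[ℂ] H),
          (∀ a, A a ∈ ρ.alg) ∧ X = ∑ a, ρ.rowKL k l a * A a},
          star (ρ.rowKL k l b) * X ∈ ρ.alg := by
        rintro X ⟨A, hAmem, rfl⟩
        rw [Finset.mul_sum]
        have hterm : ∀ a, star (ρ.rowKL k l b) * (ρ.rowKL k l a * A a)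
            = if b = a then A a else 0 := by
          intro a
          rw [← mul_assoc, star_rowKL_mul]
          by_cases h : b = a
          · rw [if_pos h, if_pos h, one_mul]
          · rw [if_neg h, if_neg h, zero_mul]
        have hsum : (∑ a, star (ρ.rowKL k l b) * (ρ.rowKL k l a * A a)) = A b := by
          rw [Finset.sum_congr rfl fun a _ => hterm a, Finset.sum_ite_eq]
          simp
        rw [hsum]
        exact hAmem b
      have hsub := wotClosure_idem (wotClosure_mono
        (by rintro x ⟨X, hX, rfl⟩; exact himg X hX) htrans)
      simp only [mul_one] at hsub; exact hsub
    -- expansion of any operator against the defect-free row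
    have hexpand : ∀ C : H →L[ℂ] H, C = ∑ a, (C * ρ.rowKL k l a) * star (ρ.rowKL k l a) := by
      intro C
      conv_lhs => rw [← mul_one C, ← sum_rowKL_mul_star ρ hCuntz k l]
      rw [Finset.mul_sum]
      exact Finset.sum_congr rfl fun a _ => by rw [mul_assoc]
    have hmem_of : ∀ C : H →L[ℂ] H,
        (∀ a, C * ρ.rowKL k l a ∈ Algebra.adjoin ℂ G) → C ∈ ρ.alg := by
      intro C hC
      rw [hexpand C, halg]
      exact sum_mem_genWotAlg _ _ fun a _ =>
        mul_mem_genWotAlg (adjoin_mem_genWotAlg (hC a)) (hstarR a)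
    -- adjoints of the generators
    obtain ⟨k', rfl⟩ : ∃ k', k = k' + 1 := ⟨k - 1, (Nat.succ_pred_eq_of_pos hk).symm⟩
    have hSstar : ∀ i, star (ρ.S i) ∈ ρ.alg := by
      intro i
      apply hmem_of
      intro a
      rw [TwoGraphRep.rowKL, ← mul_assoc, fnWordOp_succ, ← mul_assoc]
      rw [show star (ρ.S i) * ρ.S (a.1 0) = if i = a.1 0 then 1 else 0 from
        (ρ.isometS i (a.1 0)).trans (by congr)]
      by_cases h : i = a.1 0
      · rw [if_pos h, one_mul]
        exact mul_mem (wordOp_mem_adjoin ρ.S hSmem _) (wordOp_mem_adjoin ρ.T hTmem _)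
      · rw [if_neg h, zero_mul, zero_mul]
        exact zero_mem _
    have hTstar : ∀ j, star (ρ.T j) ∈ ρ.alg := by
      intro j
      apply hmem_of
      intro a
      obtain ⟨v', u', hv', hu', hcomm⟩ := comm_word ρ (List.ofFn a.1) (List.ofFn a.2)
      rw [TwoGraphRep.rowKL,
        show fnWordOp ρ.S a.1 * fnWordOp ρ.T a.2 = wordOp ρ.T v' * wordOp ρ.S u' from hcomm,
        ← mul_assoc]
      cases v' with
      | nil => simp at hv'; omega
      | cons j0 rest =>
        rw [wordOp_cons, ← mul_assoc]
        rw [show star (ρ.T j) * ρ.T j0 = if j = j0 then 1 else 0 from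
          (ρ.isometT j j0).trans (by congr)]
        by_cases h : j = j0
        · rw [if_pos h, one_mul]
          exact mul_mem (wordOp_mem_adjoin ρ.T hTmem _) (wordOp_mem_adjoin ρ.S hSmem _)
        · simp only [if_neg h, zero_mul]
          exact zero_mem _
    -- conclude
    rw [halg]
    apply star_mem_genWotAlg
    rintro A (⟨i, rfl⟩ | ⟨j, rfl⟩)
    exacts [hSstar i, hTstar j]
end
end

section
/- Let m, n ≥ 2 and let (S,T) be an irreducible Cuntz-type atomic representation of F_θ^+ on H with standard basis {ξ_t}. Say a standard basis vector ξ has a blue ring if S_uξ ∈ 𝕋ξ for some nonempty word u over {1,…,m}, a red ring if T_vξ ∈ 𝕋ξ for some nonempty word v over {1,…,n}, and a mixed ring if T_vS_uξ ∈ 𝕋ξ for some nonempty words u, v. Suppose one of the following holds: (type 2a) some standard basis vector has a blue ring and no standard basis vector has a red ring; (type 2b) some standard basis vector has a red ring and no standard basis vector has a blue ring; (type 3b(i)) no standard basis vector has a blue or red ring, and some standard basis vector has a mixed ring. Then (S,T) has a wandering vector. -/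
noncomputable section

open scoped InnerProductSpace ComplexInnerProductSpace Classical

set_option linter.unusedSectionVars false
set_option maxHeartbeats 1000000

namespace TGW

variable {H : Type*} [NormedAddCommGroup H] [InnerProductSpace ℂ H] [CompleteSpace H]

@[simp] theorem wordOp_nil {ι : Type*} (V : ι → H →L[ℂ] H) : wordOp V [] = 1 := rfl

@[simp] theorem wordOp_cons {ι : Type*} (V : ι → H →L[ℂ] H) (i : ι) (w : List ι) :
    wordOp V (i :: w) = V i * wordOp V w := by simp [wordOp]

theorem wordOp_append {ι : Type*} (V : ι → H →L[ℂ] H) (w w' : List ι) :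
    wordOp V (w ++ w') = wordOp V w * wordOp V w' := by simp [wordOp]

section Family

variable {ι : Type*} [DecidableEq ι] {Λ : Type*} (ξ : HilbertBasis Λ ℂ H) {V : ι → H →L[ℂ] H}

theorem inner_VV (hV : ∀ a b, star (V a) * V b = if a = b then (1 : H →L[ℂ] H) else 0)
    (a b : ι) (x y : H) : ⟪V a x, V b y⟫ = if a = b then ⟪x, y⟫ else 0 := by
  have h1 : ⟪V a x, V b y⟫ = ⟪x, (star (V a) * V b) y⟫ := by
    rw [ContinuousLinearMap.mul_apply, ContinuousLinearMap.star_eq_adjoint,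
      ContinuousLinearMap.adjoint_inner_right]
  rw [h1, hV a b]
  by_cases h : a = b <;> simp [h]

theorem inner_word_prefix (hV : ∀ a b, star (V a) * V b = if a = b then (1 : H →L[ℂ] H) else 0) :
    ∀ (w r : List ι) (x y : H), ⟪wordOp V w x, wordOp V (w ++ r) y⟫ = ⟪x, wordOp V r y⟫ := by
  intro w
  induction w with
  | nil => intro r x y; simp
  | cons i w ih =>
    intro r x y
    rw [List.cons_append, wordOp_cons, wordOp_cons, ContinuousLinearMap.mul_apply,
      ContinuousLinearMap.mul_apply, inner_VV hV, if_pos rfl]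
    exact ih r x y

theorem inner_word_incomp
    (hV : ∀ a b, star (V a) * V b = if a = b then (1 : H →L[ℂ] H) else 0) :
    ∀ (w w' : List ι) (x y : H), ¬ w <+: w' → ¬ w' <+: w →
      ⟪wordOp V w x, wordOp V w' y⟫ = 0 := by
  intro w
  induction w with
  | nil => intro w' x y h1 _; exact absurd (List.nil_prefix) h1
  | cons i w ih =>
    intro w' x y h1 h2
    match w' with
    | [] => exact absurd (List.nil_prefix) h2
    | i' :: w'' =>
      rw [wordOp_cons, wordOp_cons, ContinuousLinearMap.mul_apply,
        ContinuousLinearMap.mul_apply, inner_VV hV]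
      by_cases hii : i = i'
      · subst hii
        rw [if_pos rfl]
        refine ih w'' x y (fun hc => h1 ?_) (fun hc => h2 ?_)
        · exact (List.cons_prefix_cons).2 ⟨rfl, hc⟩
        · exact (List.cons_prefix_cons).2 ⟨rfl, hc⟩
      · rw [if_neg hii]

theorem smul_basis_inj {c c' : ℂ} {t t' : Λ} (hc : c ≠ 0) (h : c • ξ t = c' • ξ t') :
    t = t' ∧ c = c' := by
  have h1 := congrArg (fun v => ⟪ξ t, v⟫) h
  simp only [inner_smul_right] at h1
  rw [orthonormal_iff_ite.mp ξ.orthonormal, orthonormal_iff_ite.mp ξ.orthonormal] at h1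
  by_cases htt : t = t'
  · refine ⟨htt, ?_⟩
    rw [if_pos rfl, if_pos htt] at h1
    simpa using h1
  · rw [if_pos rfl, if_neg htt] at h1
    simp at h1
    exact absurd h1 hc

theorem perp_all_zero {v : H} (h : ∀ t, ⟪ξ t, v⟫ = 0) : v = 0 := by
  have h0 : HasSum (fun i => ξ.repr v i • ξ i) v := ξ.hasSum_repr v
  have hz : (fun i => ξ.repr v i • ξ i) = fun _ => (0 : H) := by
    funext i
    rw [ξ.repr_apply_apply, h]
    simp
  rw [hz] at h0
  exact (hasSum_zero.unique h0).symm

variable (hA : ∀ (a : ι) (t : Λ), ∃ (c : ℂ) (t' : Λ), ‖c‖ = 1 ∧ V a (ξ t) = c • ξ t')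

def fvert (a : ι) (t : Λ) : Λ := (hA a t).choose_spec.choose

theorem fvert_spec (a : ι) (t : Λ) :
    ∃ c : ℂ, ‖c‖ = 1 ∧ V a (ξ t) = c • ξ (fvert ξ hA a t) :=
  ⟨(hA a t).choose, (hA a t).choose_spec.choose_spec⟩

def wvert (w : List ι) (t : Λ) : Λ := w.foldr (fvert ξ hA) t

@[simp] theorem wvert_nil (t : Λ) : wvert ξ hA [] t = t := rfl

@[simp] theorem wvert_cons (a : ι) (w : List ι) (t : Λ) :
    wvert ξ hA (a :: w) t = fvert ξ hA a (wvert ξ hA w t) := rfl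

theorem wvert_act (w : List ι) (t : Λ) :
    ∃ c : ℂ, ‖c‖ = 1 ∧ wordOp V w (ξ t) = c • ξ (wvert ξ hA w t) := by
  induction w with
  | nil => exact ⟨1, by simp⟩
  | cons a w ih =>
    obtain ⟨c, hc, hcv⟩ := ih
    obtain ⟨d, hd, hdv⟩ := fvert_spec ξ hA a (wvert ξ hA w t)
    refine ⟨c * d, by simp [hc, hd], ?_⟩
    rw [wordOp_cons, ContinuousLinearMap.mul_apply, hcv, map_smul, hdv, smul_smul, wvert_cons]

theorem fvert_inj (hV : ∀ a b, star (V a) * V b = if a = b then (1 : H →L[ℂ] H) else 0)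
    {a a' : ι} {t t' : Λ} (h : fvert ξ hA a t = fvert ξ hA a' t') : a = a' ∧ t = t' := by
  obtain ⟨c, hc, hcv⟩ := fvert_spec ξ hA a t
  obtain ⟨c', hc', hcv'⟩ := fvert_spec ξ hA a' t'
  have hcne : (starRingEnd ℂ) c * c' ≠ 0 := by
    apply mul_ne_zero
    · simpa using fun h0 => by simp [h0] at hc
    · exact fun h0 => by simp [h0] at hc'
  have h1 : ⟪V a (ξ t), V a' (ξ t')⟫ = (starRingEnd ℂ) c * c' := by
    rw [hcv, hcv', h, inner_smul_left, inner_smul_right,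
      orthonormal_iff_ite.mp ξ.orthonormal, if_pos rfl]
    ring
  rw [inner_VV hV] at h1
  by_cases haa : a = a'
  · subst haa
    rw [if_pos rfl, orthonormal_iff_ite.mp ξ.orthonormal] at h1
    by_cases htt : t = t'
    · exact ⟨rfl, htt⟩
    · rw [if_neg htt] at h1; exact absurd h1.symm hcne
  · rw [if_neg haa] at h1; exact absurd h1.symm hcne

variable [Fintype ι]

theorem fvert_surj (hD : (∑ a, V a * star (V a)) = 1) (x : Λ) :
    ∃ a t, fvert ξ hA a t = x := by
  by_contra hno
  push_neg at hno
  have hz : ∀ a : ι, (star (V a)) (ξ x) = 0 := by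
    intro a
    apply perp_all_zero ξ
    intro t
    have hrw : ⟪ξ t, (star (V a)) (ξ x)⟫ = ⟪V a (ξ t), ξ x⟫ := by
      rw [ContinuousLinearMap.star_eq_adjoint, ContinuousLinearMap.adjoint_inner_right]
    obtain ⟨c, hc, hcv⟩ := fvert_spec ξ hA a t
    rw [hrw, hcv, inner_smul_left, orthonormal_iff_ite.mp ξ.orthonormal,
      if_neg (hno a t), mul_zero]
  have h1 : ξ x = 0 := by
    have h2 := congrArg (fun (A : H →L[ℂ] H) => A (ξ x)) hD
    simpa [ContinuousLinearMap.sum_apply, ContinuousLinearMap.mul_apply, hz] using h2.symm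
  have h3 := ξ.orthonormal.1 x
  rw [h1] at h3
  simp at h3

def pback (hD : (∑ a, V a * star (V a)) = 1) (x : Λ) : Λ :=
  (fvert_surj ξ hA hD x).choose_spec.choose

theorem pback_spec (hD : (∑ a, V a * star (V a)) = 1) (x : Λ) :
    ∃ a, fvert ξ hA a (pback ξ hA hD x) = x :=
  ⟨(fvert_surj ξ hA hD x).choose, (fvert_surj ξ hA hD x).choose_spec.choose_spec⟩

theorem pback_peel (hV : ∀ a b, star (V a) * V b = if a = b then (1 : H →L[ℂ] H) else 0)
    (hD : (∑ a, V a * star (V a)) = 1) (a : ι) (t : Λ) :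
    pback ξ hA hD (fvert ξ hA a t) = t := by
  obtain ⟨b, hb⟩ := pback_spec ξ hA hD (fvert ξ hA a t)
  exact (fvert_inj ξ hA hV hb).2

theorem pback_pow_wvert (hV : ∀ a b, star (V a) * V b = if a = b then (1 : H →L[ℂ] H) else 0)
    (hD : (∑ a, V a * star (V a)) = 1) :
    ∀ (w : List ι) (t : Λ), (pback ξ hA hD)^[w.length] (wvert ξ hA w t) = t := by
  intro w
  induction w with
  | nil => intro t; simp
  | cons a w ih =>
    intro t
    rw [wvert_cons, List.length_cons, Function.iterate_succ_apply,
      pback_peel ξ hA hV hD, ih]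

theorem exists_wvert_pback (hD : (∑ a, V a * star (V a)) = 1) :
    ∀ (b : ℕ) (x : Λ), ∃ w : List ι, w.length = b ∧
      wvert ξ hA w ((pback ξ hA hD)^[b] x) = x := by
  intro b
  induction b with
  | zero => intro x; exact ⟨[], rfl, rfl⟩
  | succ b ih =>
    intro x
    obtain ⟨w, hw, hwv⟩ := ih (pback ξ hA hD x)
    obtain ⟨a, ha⟩ := pback_spec ξ hA hD x
    refine ⟨a :: w, by simp [hw], ?_⟩
    rw [Function.iterate_succ_apply, wvert_cons, hwv, ha]

end Family


section Core

variable {Λ : Type*} {ι : Type*}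

theorem iter_comm {β γ : Λ → Λ} (h : ∀ x, β (γ x) = γ (β x)) :
    ∀ (a b : ℕ) (x : Λ), β^[a] (γ^[b] x) = γ^[b] (β^[a] x) := by
  have h1 : ∀ (b : ℕ) (x : Λ), β (γ^[b] x) = γ^[b] (β x) := by
    intro b
    induction b with
    | zero => intro x; simp
    | succ b ih =>
      intro x
      rw [Function.iterate_succ_apply, ih, h, ← Function.iterate_succ_apply]
  intro a
  induction a with
  | zero => intro b x; simp
  | succ a ih =>
    intro b x
    rw [Function.iterate_succ_apply, h1, ih, ← Function.iterate_succ_apply]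

theorem core_comm {β γ : Λ → Λ} {sV : ι → Λ → Λ}
    (hpeel : ∀ i t, β (sV i t) = t)
    (hsec : ∀ x, ∃ i, sV i (β x) = x)
    (hswap : ∀ i t, ∃ i', γ (sV i t) = sV i' (γ t)) :
    ∀ x, β (γ x) = γ (β x) := by
  intro x
  obtain ⟨i, hi⟩ := hsec x
  obtain ⟨i', hi'⟩ := hswap i (β x)
  rw [hi] at hi'
  rw [hi', hpeel]

theorem core_exists {β γ : Λ → Λ} {sV : ι → Λ → Λ} (a₁ a₂ : ι) (hne : a₁ ≠ a₂)
    (hpeel : ∀ i t, β (sV i t) = t)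
    (hsec : ∀ x, ∃ i, sV i (β x) = x)
    (hinj : ∀ i i' t, sV i t = sV i' t → i = i')
    (hswap : ∀ i t, ∃ i', γ (sV i t) = sV i' (γ t))
    (hnored : ∀ (x : Λ) (b : ℕ), b ≠ 0 → γ^[b] x ≠ x)
    (t₀ : Λ) (a₀ b₀ : ℕ) (h₀ : ¬(a₀ = 0 ∧ b₀ = 0)) (hring : β^[a₀] (γ^[b₀] t₀) = t₀) :
    ∃ s : Λ, (∀ a b : ℕ, ¬(a = 0 ∧ b = 0) → β^[a] (γ^[b] s) ≠ s) ∧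
      (∀ a b : ℕ, a ≠ 0 → b ≠ 0 → β^[a] s ≠ γ^[b] s) := by
  have hcomm : ∀ x, β (γ x) = γ (β x) := core_comm hpeel hsec hswap
  have IC := iter_comm hcomm
  have hswap_pow : ∀ (b : ℕ) (i : ι) (t : Λ), ∃ i', γ^[b] (sV i t) = sV i' (γ^[b] t) := by
    intro b
    induction b with
    | zero => intro i t; exact ⟨i, rfl⟩
    | succ b ih =>
      intro i t
      obtain ⟨i1, hi1⟩ := hswap i t
      obtain ⟨i2, hi2⟩ := ih i1 (γ t)
      refine ⟨i2, ?_⟩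
      rw [Function.iterate_succ_apply, hi1, hi2, ← Function.iterate_succ_apply]
  have r_pos : ∀ a b : ℕ, ¬(a = 0 ∧ b = 0) → β^[a] (γ^[b] t₀) = t₀ → a ≠ 0 := by
    rintro a b hab hr rfl
    rw [Function.iterate_zero_apply] at hr
    exact hnored t₀ b (fun hb => hab ⟨rfl, hb⟩) hr
  have ring_add : ∀ {a b a' b' : ℕ}, β^[a] (γ^[b] t₀) = t₀ → β^[a'] (γ^[b'] t₀) = t₀ →
      β^[a + a'] (γ^[b + b'] t₀) = t₀ := by
    intro a b a' b' h1 h2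
    have e1 : γ^[b + b'] t₀ = γ^[b'] (γ^[b] t₀) := by
      rw [add_comm, Function.iterate_add_apply]
    have e2 : β^[a + a'] (γ^[b + b'] t₀) = β^[a'] (β^[a] (γ^[b'] (γ^[b] t₀))) := by
      rw [e1, add_comm a a', Function.iterate_add_apply]
    rw [e2, IC a b', h1, h2]
  have ring_mul : ∀ (j : ℕ) {a b : ℕ}, β^[a] (γ^[b] t₀) = t₀ →
      β^[j * a] (γ^[j * b] t₀) = t₀ := by
    intro j
    induction j with
    | zero => intro a b _; simp
    | succ j ih =>
      intro a b h1
      have := ring_add (ih h1) h1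
      rwa [← Nat.succ_mul, ← Nat.succ_mul] at this
  have collapse : ∀ {A B B' : ℕ}, B < B' → β^[A] (γ^[B] t₀) = t₀ →
      β^[A] (γ^[B'] t₀) = t₀ → False := by
    intro A B B' hBB h1 h2
    have e1 : γ^[B'] t₀ = γ^[B' - B] (γ^[B] t₀) := by
      rw [← Function.iterate_add_apply, Nat.sub_add_cancel hBB.le]
    have e2 : β^[A] (γ^[B'] t₀) = γ^[B' - B] (β^[A] (γ^[B] t₀)) := by
      rw [e1, IC A (B' - B)]
    rw [e2, h1] at h2
    exact hnored t₀ (B' - B) (Nat.sub_ne_zero_of_lt hBB) h2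
  -- the minimal ring
  have hPex : ∃ a : ℕ, a ≠ 0 ∧ ∃ b, β^[a] (γ^[b] t₀) = t₀ :=
    ⟨a₀, r_pos a₀ b₀ h₀ hring, b₀, hring⟩
  set k := Nat.find hPex with hkdef
  obtain ⟨hk0, l, hkl⟩ := Nat.find_spec hPex
  have kmin : ∀ a : ℕ, a ≠ 0 → (∃ b, β^[a] (γ^[b] t₀) = t₀) → k ≤ a := by
    intro a h1 h2
    exact Nat.find_min' hPex ⟨h1, h2⟩
  have ray : ∀ a b : ℕ, a ≠ 0 → β^[a] (γ^[b] t₀) = t₀ → k * b = a * l := by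
    intro a b ha hr
    have h1 : β^[a * k] (γ^[a * l] t₀) = t₀ := ring_mul a hkl
    have h2 : β^[k * a] (γ^[k * b] t₀) = t₀ := ring_mul k hr
    rw [mul_comm k a] at h2
    rcases lt_trichotomy (a * l) (k * b) with h | h | h
    · exact absurd (collapse h h1 h2) (by simp)
    · exact h.symm
    · exact absurd (collapse h h2 h1) (by simp)
  have decomp : ∀ a : ℕ, ∀ b : ℕ, a ≠ 0 → β^[a] (γ^[b] t₀) = t₀ →
      ∃ j : ℕ, j ≠ 0 ∧ a = j * k ∧ b = j * l := by
    intro a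
    induction a using Nat.strong_induction_on with
    | _ a IH =>
      intro b ha hr
      have hka : k ≤ a := kmin a ha ⟨b, hr⟩
      have hray := ray a b ha hr
      rcases eq_or_lt_of_le hka with heq | hlt
      · refine ⟨1, one_ne_zero, by omega, ?_⟩
        have : k * b = k * l := by rw [hray, ← heq]
        have := Nat.eq_of_mul_eq_mul_left (Nat.pos_of_ne_zero hk0) this
        omega
      · have hbl : l ≤ b := by
          rcases Nat.eq_zero_or_pos l with hl | hl
          · omega
          · by_contra hc
            push_neg at hc
            have h5 : k * b < k * l :=
              mul_lt_mul_of_pos_left hc (Nat.pos_of_ne_zero hk0)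
            have h6 : k * l ≤ a * l := Nat.mul_le_mul_right l hka
            omega
        have hsub : β^[a - k] (γ^[b - l] t₀) = t₀ := by
          have e1 : γ^[b] t₀ = γ^[b - l] (γ^[l] t₀) := by
            rw [← Function.iterate_add_apply, Nat.sub_add_cancel hbl]
          have e2 : β^[a] (γ^[b] t₀) = β^[a - k] (β^[k] (γ^[b - l] (γ^[l] t₀))) := by
            rw [e1, ← Function.iterate_add_apply β (a - k) k, Nat.sub_add_cancel hka]
          have h4 : β^[a] (γ^[b] t₀) = β^[a - k] (γ^[b - l] t₀) := by
            rw [e2, IC k (b - l), hkl]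
          rw [← h4]
          exact hr
        have hak : a - k ≠ 0 := by omega
        obtain ⟨j, hj0, hjk, hjl⟩ := IH (a - k) (by omega) (b - l) hak hsub
        refine ⟨j + 1, by omega, ?_, ?_⟩
        · rw [Nat.succ_mul]; omega
        · rw [Nat.succ_mul]; omega
  have nocoin : ∀ c d : ℕ, c ≠ 0 → d ≠ 0 → β^[c] t₀ ≠ γ^[d] t₀ := by
    intro c d hc hd heq
    have cIter : ∀ j : ℕ, β^[j * c] t₀ = γ^[j * d] t₀ := by
      intro j
      induction j with
      | zero => simp
      | succ j ih =>
        rw [Nat.succ_mul, Nat.succ_mul, Function.iterate_add_apply, heq, IC, ih,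
          add_comm (j * d) d, Function.iterate_add_apply]
    have h1 : β^[c * k] (γ^[c * l] t₀) = t₀ := ring_mul c hkl
    have h2 : β^[c * k] t₀ = γ^[k * d] t₀ := by
      rw [mul_comm c k]
      exact cIter k
    rw [IC, h2, ← Function.iterate_add_apply] at h1
    exact hnored t₀ (c * l + k * d) (by positivity) h1
  -- the distinguished child of t₀ on the ring
  have hk1 : (k - 1) + 1 = k := Nat.succ_pred_eq_of_pos (Nat.pos_of_ne_zero hk0)
  set x := β^[k - 1] (γ^[l] t₀) with hxdef
  have hbx : β x = t₀ := by
    have h9 : β (β^[k - 1] (γ^[l] t₀)) = β^[(k - 1) + 1] (γ^[l] t₀) :=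
      (Function.iterate_succ_apply' β (k - 1) _).symm
    rw [hxdef, h9, hk1]
    exact hkl
  obtain ⟨istar, histar⟩ := hsec x
  rw [hbx] at histar
  -- pick a letter different from istar
  obtain ⟨i, hii⟩ : ∃ i : ι, i ≠ istar := by
    by_cases h : a₁ = istar
    · exact ⟨a₂, fun hc => hne (h ▸ hc ▸ rfl)⟩
    · exact ⟨a₁, h⟩
  refine ⟨sV i t₀, ?_, ?_⟩
  · -- no generalized ring at s
    intro a b hab heq
    by_cases ha : a = 0
    · subst ha
      rw [Function.iterate_zero_apply] at heq
      exact hnored (sV i t₀) b (fun hb => hab ⟨rfl, hb⟩) heq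
    · obtain ⟨ib, hib⟩ := hswap_pow b i t₀
      have ha1 : (a - 1) + 1 = a := Nat.succ_pred_eq_of_pos (Nat.pos_of_ne_zero ha)
      have e1 : β^[a] (γ^[b] (sV i t₀)) = β^[a - 1] (γ^[b] t₀) := by
        rw [hib]
        calc β^[a] (sV ib (γ^[b] t₀)) = β^[(a - 1) + 1] (sV ib (γ^[b] t₀)) := by rw [ha1]
          _ = β^[a - 1] (β (sV ib (γ^[b] t₀))) := Function.iterate_succ_apply β (a - 1) _
          _ = β^[a - 1] (γ^[b] t₀) := by rw [hpeel]
      rw [e1] at heq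
      -- heq : β^[a-1] (γ^[b] t₀) = sV i t₀
      have hrab : β^[a] (γ^[b] t₀) = t₀ := by
        calc β^[a] (γ^[b] t₀) = β^[(a - 1) + 1] (γ^[b] t₀) := by rw [ha1]
          _ = β (β^[a - 1] (γ^[b] t₀)) := Function.iterate_succ_apply' β (a - 1) _
          _ = β (sV i t₀) := by rw [heq]
          _ = t₀ := hpeel i t₀
      obtain ⟨j, hj0, hjk, hjl⟩ := decomp a b ha hrab
      obtain ⟨j', rfl⟩ : ∃ j', j = j' + 1 := ⟨j - 1, by omega⟩
      have hxeq : β^[a - 1] (γ^[b] t₀) = x := by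
        have hr2 : β^[j' * k] (γ^[j' * l] t₀) = t₀ := ring_mul j' hkl
        have ea : a - 1 = (k - 1) + j' * k := by
          have h7 : a = j' * k + k := by rw [hjk]; ring
          have h8 := Nat.pos_of_ne_zero hk0
          generalize j' * k = A at h7 ⊢
          omega
        have eb : b = l + j' * l := by rw [hjl]; ring
        rw [ea, eb, Function.iterate_add_apply β (k - 1) (j' * k),
          Function.iterate_add_apply γ l (j' * l), IC (j' * k) l, hr2]
      rw [hxeq] at heq
      exact hii (hinj i istar t₀ (heq.symm.trans histar.symm))
  · -- no coincidence at s
    intro a b ha hb heq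
    obtain ⟨ib, hib⟩ := hswap_pow b i t₀
    have ha1 : (a - 1) + 1 = a := Nat.succ_pred_eq_of_pos (Nat.pos_of_ne_zero ha)
    have e1 : β^[a] (sV i t₀) = β^[a - 1] t₀ := by
      calc β^[a] (sV i t₀) = β^[(a - 1) + 1] (sV i t₀) := by rw [ha1]
        _ = β^[a - 1] (β (sV i t₀)) := Function.iterate_succ_apply β (a - 1) _
        _ = β^[a - 1] t₀ := by rw [hpeel]
    rw [e1, hib] at heq
    -- heq : β^[a-1] t₀ = sV ib (γ^[b] t₀)
    have h10 : β^[a] t₀ = γ^[b] t₀ := by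
      calc β^[a] t₀ = β^[(a - 1) + 1] t₀ := by rw [ha1]
        _ = β (β^[a - 1] t₀) := Function.iterate_succ_apply' β (a - 1) t₀
        _ = β (sV ib (γ^[b] t₀)) := by rw [heq]
        _ = γ^[b] t₀ := hpeel _ _
    exact nocoin a b ha hb h10

end Core

section Rep

variable {H : Type*} [NormedAddCommGroup H] [InnerProductSpace ℂ H] [CompleteSpace H]
  {m n : ℕ} {θ : Equiv.Perm (Fin m × Fin n)} (ρ : TwoGraphRep m n θ H)
  {Λ : Type*} (ξ : HilbertBasis Λ ℂ H) (hA : ρ.AtomicBasis ξ)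

theorem vert_comm (i : Fin m) (j : Fin n) (t : Λ) :
    fvert ξ hA.1 i (fvert ξ hA.2 j t) =
      fvert ξ hA.2 (θ (i, j)).2 (fvert ξ hA.1 (θ (i, j)).1 t) := by
  obtain ⟨c1, hc1, h1⟩ := fvert_spec ξ hA.2 j t
  obtain ⟨c2, hc2, h2⟩ := fvert_spec ξ hA.1 i (fvert ξ hA.2 j t)
  obtain ⟨c3, hc3, h3⟩ := fvert_spec ξ hA.1 (θ (i, j)).1 t
  obtain ⟨c4, hc4, h4⟩ := fvert_spec ξ hA.2 (θ (i, j)).2 (fvert ξ hA.1 (θ (i, j)).1 t)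
  have hco := congrArg (fun A : H →L[ℂ] H => A (ξ t)) (ρ.comm i j)
  simp only [ContinuousLinearMap.mul_apply] at hco
  rw [h1, map_smul, h2, h3, map_smul, h4, smul_smul, smul_smul] at hco
  have hne : c1 * c2 ≠ 0 := mul_ne_zero
    (fun h0 => by simp [h0] at hc1) (fun h0 => by simp [h0] at hc2)
  exact (smul_basis_inj ξ hne hco).1

theorem swap_gs
    (hVT : ∀ j j', star (ρ.T j) * ρ.T j' = if j = j' then (1 : H →L[ℂ] H) else 0)
    (hDT : (∑ j, ρ.T j * star (ρ.T j)) = 1) (i : Fin m) (t : Λ) :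
    ∃ i', pback ξ hA.2 hDT (fvert ξ hA.1 i t) =
      fvert ξ hA.1 i' (pback ξ hA.2 hDT t) := by
  obtain ⟨j₀, hj₀⟩ := pback_spec ξ hA.2 hDT t
  have h1 := vert_comm ρ ξ hA i j₀ (pback ξ hA.2 hDT t)
  rw [hj₀] at h1
  refine ⟨(θ (i, j₀)).1, ?_⟩
  rw [h1, pback_peel ξ hA.2 hVT hDT]

theorem swap_bt
    (hVS : ∀ i i', star (ρ.S i) * ρ.S i' = if i = i' then (1 : H →L[ℂ] H) else 0)
    (hDS : (∑ i, ρ.S i * star (ρ.S i)) = 1) (j : Fin n) (t : Λ) :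
    ∃ j', pback ξ hA.1 hDS (fvert ξ hA.2 j t) =
      fvert ξ hA.2 j' (pback ξ hA.1 hDS t) := by
  obtain ⟨i₀, hi₀⟩ := pback_spec ξ hA.1 hDS t
  have hθ : θ ((θ.symm (i₀, j)).1, (θ.symm (i₀, j)).2) = (i₀, j) := by
    rw [Prod.mk.eta]; exact Equiv.apply_symm_apply θ (i₀, j)
  have h1 := vert_comm ρ ξ hA (θ.symm (i₀, j)).1 (θ.symm (i₀, j)).2 (pback ξ hA.1 hDS t)
  rw [hθ] at h1
  simp only at h1
  rw [hi₀] at h1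
  refine ⟨(θ.symm (i₀, j)).2, ?_⟩
  rw [← h1, pback_peel ξ hA.1 hVS hDS]

theorem op_comm_one : ∀ (v : List (Fin n)) (i : Fin m), ∃ (i' : Fin m) (v' : List (Fin n)),
    v'.length = v.length ∧ ρ.S i * wordOp ρ.T v = wordOp ρ.T v' * ρ.S i' := by
  intro v
  induction v with
  | nil => intro i; exact ⟨i, [], rfl, by simp⟩
  | cons j v ih =>
    intro i
    obtain ⟨i1, v1, hl, hcm⟩ := ih (θ (i, j)).1
    refine ⟨i1, (θ (i, j)).2 :: v1, by simp [hl], ?_⟩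
    rw [wordOp_cons ρ.T j v, wordOp_cons ρ.T (θ (i, j)).2 v1, ← mul_assoc, ρ.comm i j,
      mul_assoc, hcm, ← mul_assoc]

theorem op_comm : ∀ (u : List (Fin m)) (v : List (Fin n)),
    ∃ (u' : List (Fin m)) (v' : List (Fin n)),
    u'.length = u.length ∧ v'.length = v.length ∧
    wordOp ρ.S u * wordOp ρ.T v = wordOp ρ.T v' * wordOp ρ.S u' := by
  intro u
  induction u with
  | nil => intro v; exact ⟨[], v, rfl, rfl, by simp⟩
  | cons i u ih =>
    intro v
    obtain ⟨u1, v1, hu1, hv1, h1⟩ := ih v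
    obtain ⟨i2, v2, hv2, h2⟩ := op_comm_one ρ v1 i
    refine ⟨i2 :: u1, v2, by simp [hu1], by rw [hv2, hv1], ?_⟩
    rw [wordOp_cons ρ.S i u, wordOp_cons ρ.S i2 u1, mul_assoc, h1, ← mul_assoc, h2, mul_assoc]

theorem act_TS (u : List (Fin m)) (v : List (Fin n)) (t : Λ) :
    ∃ c : ℂ, ‖c‖ = 1 ∧ wordOp ρ.T v (wordOp ρ.S u (ξ t)) =
      c • ξ (wvert ξ hA.2 v (wvert ξ hA.1 u t)) := by
  obtain ⟨c1, hc1, h1⟩ := wvert_act ξ hA.1 u t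
  obtain ⟨c2, hc2, h2⟩ := wvert_act ξ hA.2 v (wvert ξ hA.1 u t)
  exact ⟨c1 * c2, by simp [hc1, hc2], by rw [h1, map_smul, h2, smul_smul]⟩

theorem wvert_comm (u : List (Fin m)) (v : List (Fin n)) (t : Λ) :
    ∃ (u' : List (Fin m)) (v' : List (Fin n)), u'.length = u.length ∧ v'.length = v.length ∧
      wvert ξ hA.1 u (wvert ξ hA.2 v t) = wvert ξ hA.2 v' (wvert ξ hA.1 u' t) := by
  obtain ⟨u', v', hu, hv, hop⟩ := op_comm ρ u v
  obtain ⟨c1, hc1, h1⟩ := wvert_act ξ hA.2 v t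
  obtain ⟨c2, hc2, h2⟩ := wvert_act ξ hA.1 u (wvert ξ hA.2 v t)
  obtain ⟨c3, hc3, h3⟩ := wvert_act ξ hA.1 u' t
  obtain ⟨c4, hc4, h4⟩ := wvert_act ξ hA.2 v' (wvert ξ hA.1 u' t)
  have hco := congrArg (fun A : H →L[ℂ] H => A (ξ t)) hop
  simp only [ContinuousLinearMap.mul_apply] at hco
  rw [h1, map_smul, h2, h3, map_smul, h4, smul_smul, smul_smul] at hco
  have hne : c1 * c2 ≠ 0 := mul_ne_zero
    (fun h0 => by simp [h0] at hc1) (fun h0 => by simp [h0] at hc2)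
  exact ⟨u', v', hu, hv, (smul_basis_inj ξ hne hco).1⟩

theorem betaring_of_blue
    (hVS : ∀ i i', star (ρ.S i) * ρ.S i' = if i = i' then (1 : H →L[ℂ] H) else 0)
    (hDS : (∑ i, ρ.S i * star (ρ.S i)) = 1) {t : Λ} (h : ρ.HasBlueRing (ξ t)) :
    ∃ a : ℕ, a ≠ 0 ∧ (pback ξ hA.1 hDS)^[a] t = t := by
  obtain ⟨u, hu, c, hc, hwu⟩ := h
  obtain ⟨c', hc', h'⟩ := wvert_act ξ hA.1 u t
  have hne : c' ≠ 0 := fun h0 => by simp [h0] at hc'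
  have hvert : wvert ξ hA.1 u t = t := (smul_basis_inj ξ hne (h'.symm.trans hwu)).1
  refine ⟨u.length, fun h0 => hu (List.length_eq_zero_iff.mp h0), ?_⟩
  have h2 := pback_pow_wvert ξ hA.1 hVS hDS u t
  rwa [hvert] at h2

theorem gammaring_of_red
    (hVT : ∀ j j', star (ρ.T j) * ρ.T j' = if j = j' then (1 : H →L[ℂ] H) else 0)
    (hDT : (∑ j, ρ.T j * star (ρ.T j)) = 1) {t : Λ} (h : ρ.HasRedRing (ξ t)) :
    ∃ b : ℕ, b ≠ 0 ∧ (pback ξ hA.2 hDT)^[b] t = t := by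
  obtain ⟨v, hv, c, hc, hwv⟩ := h
  obtain ⟨c', hc', h'⟩ := wvert_act ξ hA.2 v t
  have hne : c' ≠ 0 := fun h0 => by simp [h0] at hc'
  have hvert : wvert ξ hA.2 v t = t := (smul_basis_inj ξ hne (h'.symm.trans hwv)).1
  refine ⟨v.length, fun h0 => hv (List.length_eq_zero_iff.mp h0), ?_⟩
  have h2 := pback_pow_wvert ξ hA.2 hVT hDT v t
  rwa [hvert] at h2

theorem red_of_gamma
    (hDT : (∑ j, ρ.T j * star (ρ.T j)) = 1) {t : Λ} {b : ℕ} (hb : b ≠ 0)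
    (h : (pback ξ hA.2 hDT)^[b] t = t) : ρ.HasRedRing (ξ t) := by
  obtain ⟨v, hvl, hvv⟩ := exists_wvert_pback ξ hA.2 hDT b t
  rw [h] at hvv
  obtain ⟨c, hc, hact⟩ := wvert_act ξ hA.2 v t
  refine ⟨v, fun h0 => hb (by rw [← hvl, h0]; rfl), c, hc, ?_⟩
  rw [hact, hvv]

theorem blue_of_beta
    (hDS : (∑ i, ρ.S i * star (ρ.S i)) = 1) {t : Λ} {a : ℕ} (ha : a ≠ 0)
    (h : (pback ξ hA.1 hDS)^[a] t = t) : ρ.HasBlueRing (ξ t) := by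
  obtain ⟨u, hul, huv⟩ := exists_wvert_pback ξ hA.1 hDS a t
  rw [h] at huv
  obtain ⟨c, hc, hact⟩ := wvert_act ξ hA.1 u t
  refine ⟨u, fun h0 => ha (by rw [← hul, h0]; rfl), c, hc, ?_⟩
  rw [hact, huv]

theorem ring_of_mixed
    (hVS : ∀ i i', star (ρ.S i) * ρ.S i' = if i = i' then (1 : H →L[ℂ] H) else 0)
    (hVT : ∀ j j', star (ρ.T j) * ρ.T j' = if j = j' then (1 : H →L[ℂ] H) else 0)
    (hDS : (∑ i, ρ.S i * star (ρ.S i)) = 1) (hDT : (∑ j, ρ.T j * star (ρ.T j)) = 1)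
    {t : Λ} (h : ρ.HasMixedRing (ξ t)) :
    ∃ a b : ℕ, a ≠ 0 ∧ b ≠ 0 ∧
      (pback ξ hA.1 hDS)^[a] ((pback ξ hA.2 hDT)^[b] t) = t := by
  obtain ⟨u, v, hu, hv, c, hc, hw⟩ := h
  obtain ⟨c', hc', h'⟩ := act_TS ρ ξ hA u v t
  have hne : c' ≠ 0 := fun h0 => by simp [h0] at hc'
  have hvert : wvert ξ hA.2 v (wvert ξ hA.1 u t) = t :=
    (smul_basis_inj ξ hne (h'.symm.trans hw)).1
  refine ⟨u.length, v.length, fun h0 => hu (List.length_eq_zero_iff.mp h0),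
    fun h0 => hv (List.length_eq_zero_iff.mp h0), ?_⟩
  have h1 := pback_pow_wvert ξ hA.2 hVT hDT v (wvert ξ hA.1 u t)
  rw [hvert] at h1
  rw [h1]
  exact pback_pow_wvert ξ hA.1 hVS hDS u t

end Rep

section Wandering

variable {H : Type*} [NormedAddCommGroup H] [InnerProductSpace ℂ H] [CompleteSpace H]
  {m n : ℕ} {θ : Equiv.Perm (Fin m × Fin n)} (ρ : TwoGraphRep m n θ H)
  {Λ : Type*} (ξ : HilbertBasis Λ ℂ H) (hA : ρ.AtomicBasis ξ)

theorem lenne {κ : Type*} (w r : List κ) (hr : r ≠ []) : ¬ w = w ++ r := by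
  intro h
  apply hr
  have h5 := congrArg List.length h
  rw [List.length_append] at h5
  have h6 : r.length = 0 := by omega
  exact List.length_eq_zero_iff.mp h6

theorem wandering_of_GA_GB
    (hVS : ∀ i i', star (ρ.S i) * ρ.S i' = if i = i' then (1 : H →L[ℂ] H) else 0)
    (hVT : ∀ j j', star (ρ.T j) * ρ.T j' = if j = j' then (1 : H →L[ℂ] H) else 0)
    (hDS : (∑ i, ρ.S i * star (ρ.S i)) = 1) (hDT : (∑ j, ρ.T j * star (ρ.T j)) = 1)
    (s : Λ)
    (GA : ∀ a b : ℕ, ¬(a = 0 ∧ b = 0) →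
      (pback ξ hA.1 hDS)^[a] ((pback ξ hA.2 hDT)^[b] s) ≠ s)
    (GB : ∀ a b : ℕ, a ≠ 0 → b ≠ 0 →
      (pback ξ hA.1 hDS)^[a] s ≠ (pback ξ hA.2 hDT)^[b] s) :
    ρ.IsWanderingRep (ξ s) := by
  have W1 : ∀ (u : List (Fin m)) (v : List (Fin n)), ¬(u = [] ∧ v = []) →
      wvert ξ hA.2 v (wvert ξ hA.1 u s) ≠ s := by
    intro u v huv heq
    have h1 := pback_pow_wvert ξ hA.2 hVT hDT v (wvert ξ hA.1 u s)
    rw [heq] at h1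
    have h2 : (pback ξ hA.1 hDS)^[u.length] ((pback ξ hA.2 hDT)^[v.length] s) = s := by
      rw [h1]
      exact pback_pow_wvert ξ hA.1 hVS hDS u s
    refine GA u.length v.length ?_ h2
    rintro ⟨hu0, hv0⟩
    exact huv ⟨List.length_eq_zero_iff.mp hu0, List.length_eq_zero_iff.mp hv0⟩
  have W2 : ∀ (u : List (Fin m)) (v : List (Fin n)), v ≠ [] →
      wvert ξ hA.2 v s ≠ wvert ξ hA.1 u s := by
    intro u v hv heq
    obtain ⟨v₀, hv₀l, hv₀⟩ := exists_wvert_pback ξ hA.2 hDT v.length s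
    obtain ⟨u₁, v₁, hu₁, hv₁, hwc⟩ :=
      wvert_comm ρ ξ hA u v₀ ((pback ξ hA.2 hDT)^[v.length] s)
    rw [hv₀, ← heq] at hwc
    have e1 : (pback ξ hA.2 hDT)^[v.length] (wvert ξ hA.2 v s) = s :=
      pback_pow_wvert ξ hA.2 hVT hDT v s
    rw [hwc] at e1
    have e2 := pback_pow_wvert ξ hA.2 hVT hDT v₁
      (wvert ξ hA.1 u₁ ((pback ξ hA.2 hDT)^[v.length] s))
    rw [hv₁, hv₀l] at e2
    rw [e2] at e1
    -- e1 : wvert_S u₁ (γ^[|v|] s) = s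
    have hvl : v.length ≠ 0 := fun h0 => hv (List.length_eq_zero_iff.mp h0)
    by_cases hu : u₁ = []
    · rw [hu, wvert_nil] at e1
      exact GA 0 v.length (fun hh => hvl hh.2) (by simpa using e1)
    · have h4 : (pback ξ hA.1 hDS)^[u₁.length] s = (pback ξ hA.2 hDT)^[v.length] s := by
        conv_lhs => rw [← e1]
        exact pback_pow_wvert ξ hA.1 hVS hDS u₁ _
      exact GB u₁.length v.length (fun h0 => hu (List.length_eq_zero_iff.mp h0)) hvl h4
  have hTS : ∀ (u : List (Fin m)) (v : List (Fin n)), ¬(u = [] ∧ v = []) →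
      ⟪ξ s, wordOp ρ.T v (wordOp ρ.S u (ξ s))⟫ = 0 := by
    intro u v huv
    obtain ⟨c, hc, hact⟩ := act_TS ρ ξ hA u v s
    rw [hact, inner_smul_right, orthonormal_iff_ite.mp ξ.orthonormal,
      if_neg (fun hh : s = _ => W1 u v huv hh.symm), mul_zero]
  have hTvsS : ∀ (u : List (Fin m)) (v : List (Fin n)), v ≠ [] →
      ⟪wordOp ρ.T v (ξ s), wordOp ρ.S u (ξ s)⟫ = 0 := by
    intro u v hv
    obtain ⟨c1, hc1, h1⟩ := wvert_act ξ hA.2 v s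
    obtain ⟨c2, hc2, h2⟩ := wvert_act ξ hA.1 u s
    rw [h1, h2, inner_smul_left, inner_smul_right, orthonormal_iff_ite.mp ξ.orthonormal,
      if_neg (W2 u v hv), mul_zero, mul_zero]
  have HT : ∀ (v v' : List (Fin n)), ⟪wordOp ρ.T v (ξ s), wordOp ρ.T v' (ξ s)⟫ =
      if v = v' then 1 else 0 := by
    intro v v'
    by_cases h1 : v <+: v'
    · obtain ⟨a, rfl⟩ := h1
      by_cases ha : a = []
      · subst ha
        have h3 := inner_word_prefix hVT v [] (ξ s) (ξ s)
        rw [List.append_nil] at h3 ⊢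
        rw [if_pos rfl, h3]
        simp only [wordOp_nil, ContinuousLinearMap.one_apply]
        rw [orthonormal_iff_ite.mp ξ.orthonormal, if_pos rfl]
      · rw [inner_word_prefix hVT v a, if_neg (lenne v a ha)]
        have h6 := hTS [] a (fun hh => ha hh.2)
        simpa using h6
    · by_cases h2 : v' <+: v
      · obtain ⟨a, rfl⟩ := h2
        have ha : a ≠ [] := fun h0 => h1 (by simp [h0])
        rw [if_neg (fun h0 : v' ++ a = v' => lenne v' a ha h0.symm)]
        rw [← inner_conj_symm, inner_word_prefix hVT v' a]
        have h5 : ⟪ξ s, wordOp ρ.T a (ξ s)⟫ = 0 := by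
          have h6 := hTS [] a (fun hh => ha hh.2)
          simpa using h6
        rw [h5, map_zero]
      · rw [inner_word_incomp hVT v v' _ _ h1 h2,
          if_neg (fun h0 : v = v' => h1 (h0 ▸ List.prefix_refl v))]
  have HL : ∀ (v v' : List (Fin n)) (r : List (Fin m)), r ≠ [] →
      ⟪wordOp ρ.T v (ξ s), wordOp ρ.S r (wordOp ρ.T v' (ξ s))⟫ = 0 := by
    intro v v' r hr
    obtain ⟨r₂, v₂, hr₂, hv₂, hop⟩ := op_comm ρ r v'
    have hrw : wordOp ρ.S r (wordOp ρ.T v' (ξ s)) =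
        wordOp ρ.T v₂ (wordOp ρ.S r₂ (ξ s)) := by
      have h7 := congrArg (fun A : H →L[ℂ] H => A (ξ s)) hop
      simpa [ContinuousLinearMap.mul_apply] using h7
    rw [hrw]
    have hr₂ne : r₂ ≠ [] := by
      intro h0
      rw [h0] at hr₂
      exact hr (List.length_eq_zero_iff.mp hr₂.symm)
    by_cases h1 : v <+: v₂
    · obtain ⟨a, rfl⟩ := h1
      rw [inner_word_prefix hVT v a]
      exact hTS r₂ a (fun hh => hr₂ne hh.1)
    · by_cases h2 : v₂ <+: v
      · obtain ⟨a, rfl⟩ := h2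
        have ha : a ≠ [] := fun h0 => h1 (by simp [h0])
        rw [← inner_conj_symm, inner_word_prefix hVT v₂ a]
        have h5 : ⟪wordOp ρ.S r₂ (ξ s), wordOp ρ.T a (ξ s)⟫ = 0 := by
          rw [← inner_conj_symm, hTvsS r₂ a ha, map_zero]
        rw [h5, map_zero]
      · exact inner_word_incomp hVT _ _ _ _ h1 h2
  refine ⟨ξ.orthonormal.1 s, ?_⟩
  intro u u' v v'
  simp only [ContinuousLinearMap.mul_apply]
  by_cases h1 : u <+: u'
  · obtain ⟨r, rfl⟩ := h1
    by_cases hr : r = []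
    · subst hr
      have h3 := inner_word_prefix hVS u [] (wordOp ρ.T v (ξ s)) (wordOp ρ.T v' (ξ s))
      rw [List.append_nil] at h3 ⊢
      rw [h3]
      simp only [wordOp_nil, ContinuousLinearMap.one_apply]
      rw [HT v v']
      by_cases hv : v = v' <;> simp [hv]
    · have h3 := inner_word_prefix hVS u r (wordOp ρ.T v (ξ s)) (wordOp ρ.T v' (ξ s))
      rw [h3, HL v v' r hr, if_neg (fun hh : u = u ++ r ∧ v = v' => lenne u r hr hh.1)]
  · by_cases h2 : u' <+: u
    · obtain ⟨r, rfl⟩ := h2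
      have hr : r ≠ [] := fun h0 => h1 (by simp [h0])
      rw [← inner_conj_symm]
      have h3 := inner_word_prefix hVS u' r (wordOp ρ.T v' (ξ s)) (wordOp ρ.T v (ξ s))
      rw [h3, HL v' v r hr, map_zero,
        if_neg (fun hh : u' ++ r = u' ∧ v = v' => lenne u' r hr hh.1.symm)]
    · rw [inner_word_incomp hVS u u' _ _ h1 h2,
        if_neg (fun hh : u = u' ∧ v = v' => h1 (hh.1 ▸ List.prefix_refl u))]

end Wandering

end TGW

/-- Atomic representations of type 2a, 2b, or 3b(i) have wandering vectors. -/
theorem statement3 {m n : ℕ} (hm : 2 ≤ m) (hn : 2 ≤ n)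
    {θ : Equiv.Perm (Fin m × Fin n)} {H : Type*}
    [NormedAddCommGroup H] [InnerProductSpace ℂ H] [CompleteSpace H]
    (ρ : TwoGraphRep m n θ H) (hCuntz : ρ.CuntzType) (hirr : ρ.Irreducible)
    {Λ : Type*} (ξ : HilbertBasis Λ ℂ H) (hAtomic : ρ.AtomicBasis ξ)
    (hcase :
      ((∃ t, ρ.HasBlueRing (ξ t)) ∧ ∀ t, ¬ ρ.HasRedRing (ξ t)) ∨
      ((∃ t, ρ.HasRedRing (ξ t)) ∧ ∀ t, ¬ ρ.HasBlueRing (ξ t)) ∨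
      ((∀ t, ¬ ρ.HasBlueRing (ξ t) ∧ ¬ ρ.HasRedRing (ξ t)) ∧
        ∃ t, ρ.HasMixedRing (ξ t))) :
    ∃ ζ : H, ρ.IsWanderingRep ζ := by
  classical
  have hVS := ρ.isometS
  have hVT := ρ.isometT
  have hDS := hCuntz.1
  have hDT := hCuntz.2
  have hm0 : (0 : ℕ) < m := by omega
  have hm1 : (1 : ℕ) < m := by omega
  have hn0 : (0 : ℕ) < n := by omega
  have hn1 : (1 : ℕ) < n := by omega
  rcases hcase with ⟨⟨t₀, hblue⟩, hnored⟩ | ⟨⟨t₀, hred⟩, hnoblue⟩ | ⟨hnone, t₀, hmix⟩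
  · obtain ⟨a₀, ha₀, hr₀⟩ := TGW.betaring_of_blue ρ ξ hAtomic hVS hDS hblue
    have hring : (TGW.pback ξ hAtomic.1 hDS)^[a₀] ((TGW.pback ξ hAtomic.2 hDT)^[0] t₀) = t₀ := by
      simpa using hr₀
    have hnored' : ∀ (x : Λ) (b : ℕ), b ≠ 0 → (TGW.pback ξ hAtomic.2 hDT)^[b] x ≠ x :=
      fun x b hb h => hnored x (TGW.red_of_gamma ρ ξ hAtomic hDT hb h)
    obtain ⟨s, GA, GB⟩ := TGW.core_exists (⟨0, hm0⟩ : Fin m) ⟨1, hm1⟩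
      (by simp [Fin.ext_iff])
      (TGW.pback_peel ξ hAtomic.1 hVS hDS) (TGW.pback_spec ξ hAtomic.1 hDS)
      (fun i i' t h => (TGW.fvert_inj ξ hAtomic.1 hVS h).1)
      (TGW.swap_gs ρ ξ hAtomic hVT hDT) hnored' t₀ a₀ 0 (fun hh => ha₀ hh.1) hring
    exact ⟨ξ s, TGW.wandering_of_GA_GB ρ ξ hAtomic hVS hVT hDS hDT s GA GB⟩
  · obtain ⟨b₀, hb₀, hr₀⟩ := TGW.gammaring_of_red ρ ξ hAtomic hVT hDT hred
    have hring : (TGW.pback ξ hAtomic.2 hDT)^[b₀] ((TGW.pback ξ hAtomic.1 hDS)^[0] t₀) = t₀ := by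
      simpa using hr₀
    have hnoblue' : ∀ (x : Λ) (a : ℕ), a ≠ 0 → (TGW.pback ξ hAtomic.1 hDS)^[a] x ≠ x :=
      fun x a ha h => hnoblue x (TGW.blue_of_beta ρ ξ hAtomic hDS ha h)
    obtain ⟨s, GA', GB'⟩ := TGW.core_exists (⟨0, hn0⟩ : Fin n) ⟨1, hn1⟩
      (by simp [Fin.ext_iff])
      (TGW.pback_peel ξ hAtomic.2 hVT hDT) (TGW.pback_spec ξ hAtomic.2 hDT)
      (fun j j' t h => (TGW.fvert_inj ξ hAtomic.2 hVT h).1)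
      (TGW.swap_bt ρ ξ hAtomic hVS hDS) hnoblue' t₀ b₀ 0 (fun hh => hb₀ hh.1) hring
    have hcm : ∀ x, (TGW.pback ξ hAtomic.1 hDS) ((TGW.pback ξ hAtomic.2 hDT) x) =
        (TGW.pback ξ hAtomic.2 hDT) ((TGW.pback ξ hAtomic.1 hDS) x) :=
      TGW.core_comm (TGW.pback_peel ξ hAtomic.1 hVS hDS) (TGW.pback_spec ξ hAtomic.1 hDS)
        (TGW.swap_gs ρ ξ hAtomic hVT hDT)
    have IC := TGW.iter_comm hcm
    have GA : ∀ a b : ℕ, ¬(a = 0 ∧ b = 0) →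
        (TGW.pback ξ hAtomic.1 hDS)^[a] ((TGW.pback ξ hAtomic.2 hDT)^[b] s) ≠ s := by
      intro a b hab h
      exact GA' b a (fun hh => hab ⟨hh.2, hh.1⟩) ((IC a b s).symm.trans h)
    have GB : ∀ a b : ℕ, a ≠ 0 → b ≠ 0 →
        (TGW.pback ξ hAtomic.1 hDS)^[a] s ≠ (TGW.pback ξ hAtomic.2 hDT)^[b] s :=
      fun a b ha hb h => GB' b a hb ha h.symm
    exact ⟨ξ s, TGW.wandering_of_GA_GB ρ ξ hAtomic hVS hVT hDS hDT s GA GB⟩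
  · obtain ⟨a₀, b₀, ha₀, hb₀, hring⟩ := TGW.ring_of_mixed ρ ξ hAtomic hVS hVT hDS hDT hmix
    have hnored' : ∀ (x : Λ) (b : ℕ), b ≠ 0 → (TGW.pback ξ hAtomic.2 hDT)^[b] x ≠ x :=
      fun x b hb h => (hnone x).2 (TGW.red_of_gamma ρ ξ hAtomic hDT hb h)
    obtain ⟨s, GA, GB⟩ := TGW.core_exists (⟨0, hm0⟩ : Fin m) ⟨1, hm1⟩
      (by simp [Fin.ext_iff])
      (TGW.pback_peel ξ hAtomic.1 hVS hDS) (TGW.pback_spec ξ hAtomic.1 hDS)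
      (fun i i' t h => (TGW.fvert_inj ξ hAtomic.1 hVS h).1)
      (TGW.swap_gs ρ ξ hAtomic hVT hDT) hnored' t₀ a₀ b₀ (fun hh => ha₀ hh.1) hring
    exact ⟨ξ s, TGW.wandering_of_GA_GB ρ ξ hAtomic hVS hVT hDS hDT s GA GB⟩
end
end
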